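/- Let n ≥ 2. The convex hull in ℝ^{n+1} of the 2ⁿ points v(ε) = (ε₁,…,εₙ, ∏ᵢ εᵢ), ε ∈ {0,1}ⁿ, equals the set Π = {(x₁,…,xₙ,z) ∈ ℝ^{n+1} : (x₁,…,xₙ) ∈ [0,1]ⁿ and max(x₁+⋯+xₙ−(n−1), 0) ≤ z ≤ min{x₁,…,xₙ}}. (The set of coherent prevision assessments on n conditional events and their conjunction coincides with the polytope I*.) -/

import Mathlib

open Finset

private def Verts (n : ℕ) : Set ((Fin n → ℝ) × ℝ) :=
  {q | ∃ ε : Fin n → Bool,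
    q = (fun i => if ε i then 1 else 0, ∏ i, if ε i then (1 : ℝ) else 0)}

private lemma top_mem (n : ℕ) :
    ((fun _ => (1:ℝ), (1:ℝ)) : (Fin n → ℝ) × ℝ) ∈ Verts n := by
  refine ⟨fun _ => true, ?_⟩
  simp

private lemma oneMinus_mem {n : ℕ} (j : Fin n) :
    ((fun i => if i = j then (0:ℝ) else 1, (0:ℝ)) : (Fin n → ℝ) × ℝ) ∈ Verts n := by
  refine ⟨fun i => decide (i ≠ j), ?_⟩
  refine Prod.ext (funext fun i => ?_) ?_
  · by_cases h : i = j <;> simp [h]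
  · symm
    exact Finset.prod_eq_zero (Finset.mem_univ j) (by simp)

private def phiMap (n : ℕ) (j0 : Fin n) : (Fin n → ℝ) →ₗ[ℝ] (Fin n → ℝ) × ℝ where
  toFun y := (fun i => if i = j0 then 0 else y i, 0)
  map_add' a b := by
    refine Prod.ext (funext fun i => ?_) (by simp)
    by_cases h : i = j0 <;> simp [h]
  map_smul' c a := by
    refine Prod.ext (funext fun i => ?_) (by simp)
    by_cases h : i = j0 <;> simp [h]

private lemma face_mem {n : ℕ} (j0 : Fin n) {y : Fin n → ℝ}
    (hy : ∀ i, y i ∈ Set.Icc (0:ℝ) 1) (hy0 : y j0 = 0) :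
    ((y, 0) : (Fin n → ℝ) × ℝ) ∈ convexHull ℝ (Verts n) := by
  have hphi : ∀ v : Fin n → ℝ, phiMap n j0 v = (fun i => if i = j0 then 0 else v i, 0) :=
    fun _ => rfl
  have hcube : y ∈ convexHull ℝ (Set.pi Set.univ fun _ : Fin n => ({0,1} : Set ℝ)) := by
    apply mem_convexHull_pi
    intro i _
    rw [convexHull_pair, segment_eq_Icc zero_le_one]
    exact hy i
  have himg : phiMap n j0 y ∈
      convexHull ℝ ((phiMap n j0) '' (Set.pi Set.univ fun _ => ({0,1} : Set ℝ))) := by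
    rw [← LinearMap.image_convexHull]
    exact Set.mem_image_of_mem _ hcube
  have hsub : (phiMap n j0) '' (Set.pi Set.univ fun _ => ({0,1} : Set ℝ)) ⊆ Verts n := by
    rintro _ ⟨c, hc, rfl⟩
    refine ⟨fun i => if i = j0 then false else decide (c i = 1), ?_⟩
    rw [hphi]
    refine Prod.ext (funext fun i => ?_) ?_
    · by_cases h : i = j0
      · simp [h]
      · rcases hc i (Set.mem_univ i) with h0 | h1
        · simp [h, h0]
        · simp at h1
          simp [h, h1]
    · symm
      exact Finset.prod_eq_zero (Finset.mem_univ j0) (by simp)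
  have hmem := convexHull_mono hsub himg
  have heq : phiMap n j0 y = (y, 0) := by
    rw [hphi]
    refine Prod.ext (funext fun i => ?_) rfl
    by_cases h : i = j0 <;> simp [h, hy0]
  rwa [heq] at hmem

private lemma hyperplane_mem {n : ℕ} {u : Fin n → ℝ}
    (hu : ∀ i, u i ∈ Set.Icc (0:ℝ) 1) (hsum : ∑ i, u i = (n:ℝ) - 1) :
    ((u, 0) : (Fin n → ℝ) × ℝ) ∈ convexHull ℝ (Verts n) := by
  have h1 : ∑ _j : Fin n, (1:ℝ) = n := by simp
  have hws : ∑ j, (1 - u j) = 1 := by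
    rw [Finset.sum_sub_distrib, h1, hsum]; ring
  have hmem := Finset.centerMass_mem_convexHull (t := (univ : Finset (Fin n)))
      (w := fun j => 1 - u j)
      (z := fun j => ((fun i => if i = j then (0:ℝ) else 1, (0:ℝ)) : (Fin n → ℝ) × ℝ))
      (fun j _ => by show (0:ℝ) ≤ 1 - u j; linarith [(hu j).2]) (by rw [hws]; norm_num)
      (fun j _ => oneMinus_mem j)
  rw [Finset.centerMass_eq_of_sum_1 _ _ hws] at hmem
  have heq : (∑ j, (1 - u j) •
      ((fun i => if i = j then (0:ℝ) else 1, (0:ℝ)) : (Fin n → ℝ) × ℝ)) = (u, 0) := by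
    refine Prod.ext ?_ ?_
    · rw [Prod.fst_sum]
      simp only [Prod.smul_mk]
      funext i
      rw [Finset.sum_apply]
      have key : ∀ j : Fin n, ((1 - u j) •
          ((fun i' => if i' = j then (0:ℝ) else 1) : Fin n → ℝ)) i
          = (1 - u j) - (if j = i then (1 - u j) else 0) := by
        intro j
        by_cases h : i = j
        · simp [h]
        · have h' : ¬ (j = i) := fun hh => h hh.symm
          simp [h, h']
      rw [Finset.sum_congr rfl (fun j _ => key j), Finset.sum_sub_distrib, hws,
        Finset.sum_ite_eq' univ i, if_pos (mem_univ i)]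
      ring
    · rw [Prod.snd_sum]
      simp
  rwa [heq] at hmem

private lemma sum_erase_le {n : ℕ} (hn : 1 ≤ n) {x : Fin n → ℝ} (hx : ∀ i, x i ≤ 1) (j : Fin n) :
    ∑ i ∈ univ.erase j, x i ≤ (n:ℝ) - 1 := by
  calc ∑ i ∈ univ.erase j, x i ≤ ∑ _i ∈ univ.erase j, (1:ℝ) :=
        Finset.sum_le_sum (fun i _ => hx i)
    _ = (((univ.erase j).card : ℕ) : ℝ) := by simp
    _ = (((n - 1 : ℕ)) : ℝ) := by
        rw [card_erase_of_mem (mem_univ j), card_univ, Fintype.card_fin]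
    _ = (n:ℝ) - 1 := by rw [Nat.cast_sub hn]; simp

theorem convexHull_eq_coherent_set (n : ℕ) (hn : 2 ≤ n) :
    convexHull ℝ {q : (Fin n → ℝ) × ℝ | ∃ ε : Fin n → Bool,
        q = (fun i => if ε i then 1 else 0, ∏ i, if ε i then (1 : ℝ) else 0)} =
      {p : (Fin n → ℝ) × ℝ | (∀ i, p.1 i ∈ Set.Icc (0 : ℝ) 1) ∧
        max ((∑ i, p.1 i) - ((n : ℝ) - 1)) 0 ≤ p.2 ∧
        p.2 ≤ ⨅ i, p.1 i} := by
  haveI : Nonempty (Fin n) := ⟨⟨0, by omega⟩⟩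
  have hn1 : 1 ≤ n := by omega
  have hsum_n : ∑ _i : Fin n, (1:ℝ) = n := by simp
  show convexHull ℝ (Verts n) = _
  apply Set.Subset.antisymm
  · apply convexHull_min
    · rintro _ ⟨ε, rfl⟩
      simp only [Set.mem_setOf_eq]
      by_cases hall : ∀ i, ε i = true
      · have hsum : (∑ i, if ε i = true then (1:ℝ) else 0) = n := by simp [hall]
        have hprod : (∏ i, if ε i = true then (1:ℝ) else 0) = 1 := by simp [hall]
        refine ⟨fun i => by simp [hall i], ?_, ?_⟩
        · simp only [hsum, hprod, max_le_iff]
          constructor <;> norm_num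
        · simp only [hprod]
          exact le_ciInf fun i => by simp [hall i]
      · push_neg at hall
        obtain ⟨j, hj⟩ := hall
        have hj' : ε j = false := by
          cases h : ε j
          · rfl
          · exact absurd h hj
        have hprod : (∏ i, if ε i = true then (1:ℝ) else 0) = 0 :=
          Finset.prod_eq_zero (Finset.mem_univ j) (by simp [hj'])
        have h3 : (if ε j = true then (1:ℝ) else 0)
            + ∑ i ∈ univ.erase j, (if ε i = true then (1:ℝ) else 0)
            = ∑ i, (if ε i = true then (1:ℝ) else 0) :=
          Finset.add_sum_erase univ (fun i => if ε i = true then (1:ℝ) else 0) (mem_univ j)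
        have h4 : ∑ i ∈ univ.erase j, (if ε i = true then (1:ℝ) else 0) ≤ (n:ℝ) - 1 :=
          sum_erase_le hn1 (fun i => by by_cases h : ε i = true <;> simp [h]) j
        rw [hj'] at h3
        simp only [Bool.false_eq_true, if_false, zero_add] at h3
        refine ⟨fun i => by by_cases h : ε i = true <;> simp [h], ?_, ?_⟩
        · simp only [hprod, max_le_iff]
          constructor
          · rw [← h3]; linarith
          · exact le_refl 0
        · simp only [hprod]
          exact le_ciInf fun i => by by_cases h : ε i = true <;> simp [h]
    · intro p hp q hq a b ha hb hab
      obtain ⟨hp1, hp2, hp3⟩ := hp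
      obtain ⟨hq1, hq2, hq3⟩ := hq
      have hps : ∀ i, p.2 ≤ p.1 i :=
        fun i => le_trans hp3 (ciInf_le (Set.finite_range _).bddBelow i)
      have hqs : ∀ i, q.2 ≤ q.1 i :=
        fun i => le_trans hq3 (ciInf_le (Set.finite_range _).bddBelow i)
      rw [max_le_iff] at hp2 hq2
      simp only [Set.mem_setOf_eq, Prod.fst_add, Prod.snd_add, Prod.smul_fst, Prod.smul_snd,
        Pi.add_apply, Pi.smul_apply, smul_eq_mul]
      have hsum : ∑ i, (a * p.1 i + b * q.1 i) = a * ∑ i, p.1 i + b * ∑ i, q.1 i := by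
        rw [Finset.mul_sum, Finset.mul_sum, ← Finset.sum_add_distrib]
      refine ⟨?_, ?_, ?_⟩
      · intro i
        constructor
        · nlinarith [(hp1 i).1, (hq1 i).1]
        · nlinarith [(hp1 i).2, (hq1 i).2]
      · rw [hsum, max_le_iff]
        have h1 := mul_le_mul_of_nonneg_left hp2.1 ha
        have h2 := mul_le_mul_of_nonneg_left hq2.1 hb
        have h3 := mul_le_mul_of_nonneg_left hp2.2 ha
        have h4 := mul_le_mul_of_nonneg_left hq2.2 hb
        have hkey : a * (∑ i, p.1 i - ((n:ℝ)-1)) + b * (∑ i, q.1 i - ((n:ℝ)-1))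
            = a * ∑ i, p.1 i + b * ∑ i, q.1 i - ((n:ℝ)-1) := by
          linear_combination (1 - (n:ℝ)) * hab
        constructor
        · linarith
        · linarith
      · refine le_ciInf fun i => ?_
        have h1 := mul_le_mul_of_nonneg_left (hps i) ha
        have h2 := mul_le_mul_of_nonneg_left (hqs i) hb
        linarith
  · rintro p ⟨hIcc, hmax, hmin⟩
    set x := p.1 with hxdef
    set z := p.2 with hzdef
    obtain ⟨i0, hi0⟩ := Finite.exists_min x
    have hMeq : (⨅ i, x i) = x i0 :=
      le_antisymm (ciInf_le (Set.finite_range x).bddBelow i0) (le_ciInf hi0)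
    set m := x i0 with hm
    have hzm : z ≤ m := hMeq ▸ hmin
    have hm0 : 0 ≤ m := (hIcc i0).1
    have hm1 : m ≤ 1 := (hIcc i0).2
    have hmle : ∀ i, m ≤ x i := hi0
    obtain ⟨hzA, hz0⟩ := max_le_iff.1 hmax
    -- the "min" point (x, m)
    have hxM : ((x, m) : (Fin n → ℝ) × ℝ) ∈ convexHull ℝ (Verts n) := by
      rcases eq_or_lt_of_le hm1 with h1 | h1
      · have hx1 : x = fun _ => 1 :=
          funext fun i => le_antisymm (hIcc i).2 (h1 ▸ hmle i)
        rw [hx1, h1]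
        exact subset_convexHull ℝ _ (top_mem n)
      · have h1m : (0:ℝ) < 1 - m := by linarith
        set y : Fin n → ℝ := fun i => (x i - m)/(1 - m) with hy
        have hyIcc : ∀ i, y i ∈ Set.Icc (0:ℝ) 1 := fun i =>
          ⟨div_nonneg (by linarith [hmle i]) h1m.le,
           by rw [hy]; dsimp only; rw [div_le_one h1m]; linarith [(hIcc i).2]⟩
        have hy0 : y i0 = 0 := by
          rw [hy]; dsimp only; rw [← hm, sub_self, zero_div]
        have hface := face_mem i0 hyIcc hy0
        have htop := subset_convexHull ℝ (Verts n) (top_mem n)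
        have key : m • ((fun _ => (1:ℝ), (1:ℝ)) : (Fin n → ℝ) × ℝ)
            + (1 - m) • ((y, 0) : (Fin n → ℝ) × ℝ) = (x, m) := by
          refine Prod.ext (funext fun i => ?_) ?_
          · simp only [Prod.fst_add, Prod.smul_fst, Pi.add_apply, Pi.smul_apply, smul_eq_mul]
            rw [hy]; dsimp only
            field_simp
            ring
          · simp only [Prod.snd_add, Prod.smul_snd, smul_eq_mul]
            ring
        exact key ▸ (convex_convexHull ℝ (Verts n)) htop hface hm0 (by linarith) (by ring)
    -- the "max/low" point (x, L)
    have hxL : ((x, max ((∑ i, x i) - ((n:ℝ)-1)) 0) : (Fin n → ℝ) × ℝ)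
        ∈ convexHull ℝ (Verts n) := by
      rcases le_or_gt (∑ i, x i) ((n:ℝ)-1) with hs | hs
      · rw [max_eq_right (by linarith)]
        rcases eq_or_lt_of_le hs with he | he
        · exact hyperplane_mem hIcc he
        · set T := (n:ℝ) - ∑ i, x i with hT
          have hT1 : 1 < T := by rw [hT]; linarith
          have hTpos : (0:ℝ) < T := by linarith
          have hnpos : (0:ℝ) < n := by positivity
          have hnm : (n:ℝ) * m ≤ ∑ i, x i := by
            calc (n:ℝ) * m = ∑ _i : Fin n, m := by
                  rw [Finset.sum_const, card_univ, Fintype.card_fin, nsmul_eq_mul]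
              _ ≤ ∑ i, x i := Finset.sum_le_sum (fun i _ => hmle i)
          have hmlt1 : m < 1 := by nlinarith
          have h1m : (0:ℝ) < 1 - m := by linarith
          have hsumTe : ∑ i, (1 - x i) = T := by
            rw [Finset.sum_sub_distrib, hsum_n, hT]
          have hsub_le : ∀ j, 1 - x j ≤ T := by
            intro j
            calc 1 - x j ≤ ∑ i, (1 - x i) :=
                  Finset.single_le_sum (f := fun i => 1 - x i)
                    (fun i _ => by show (0:ℝ) ≤ 1 - x i; linarith [(hIcc i).2]) (mem_univ j)
              _ = T := hsumTe
          set u : Fin n → ℝ := fun j => 1 - (1 - x j)/T with hu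
          set w : Fin n → ℝ := fun j => (x j - m)/(1 - m) with hw
          have huIcc : ∀ i, u i ∈ Set.Icc (0:ℝ) 1 := by
            intro i
            rw [hu]; dsimp only
            constructor
            · rw [sub_nonneg, div_le_one hTpos]; exact hsub_le i
            · have : 0 ≤ (1 - x i)/T := div_nonneg (by linarith [(hIcc i).2]) hTpos.le
              linarith
          have husum : ∑ i, u i = (n:ℝ) - 1 := by
            rw [hu]; dsimp only
            rw [Finset.sum_sub_distrib, hsum_n, ← Finset.sum_div, hsumTe,
              div_self (ne_of_gt hTpos)]
          have humem := hyperplane_mem huIcc husum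
          have hwIcc : ∀ i, w i ∈ Set.Icc (0:ℝ) 1 := fun i =>
            ⟨div_nonneg (by linarith [hmle i]) h1m.le,
             by rw [hw]; dsimp only; rw [div_le_one h1m]; linarith [(hIcc i).2]⟩
          have hw0 : w i0 = 0 := by
            rw [hw]; dsimp only; rw [← hm, sub_self, zero_div]
          have hwmem := face_mem i0 hwIcc hw0
          set lam := T * m / (T - 1 + m) with hlam
          have hD : (0:ℝ) < T - 1 + m := by linarith
          have hlam0 : 0 ≤ lam := div_nonneg (by nlinarith) hD.le
          have hlam1 : lam ≤ 1 := by
            rw [hlam, div_le_one hD]; nlinarith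
          have key : lam • ((u, (0:ℝ)) : (Fin n → ℝ) × ℝ)
              + (1 - lam) • ((w, (0:ℝ)) : (Fin n → ℝ) × ℝ) = (x, 0) := by
            refine Prod.ext (funext fun i => ?_) ?_
            · simp only [Prod.fst_add, Prod.smul_fst, Pi.add_apply, Pi.smul_apply, smul_eq_mul]
              rw [hu, hw, hlam]; dsimp only
              field_simp
              ring
            · simp only [Prod.snd_add, Prod.smul_snd, smul_eq_mul]
              ring
          exact key ▸ (convex_convexHull ℝ (Verts n)) humem hwmem hlam0 (by linarith) (by ring)
      · rw [max_eq_left (by linarith)]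
        set a := ∑ i, x i - ((n:ℝ)-1) with haa
        have hale : ∀ j, a ≤ x j := by
          intro j
          have h2 := sum_erase_le hn1 (fun i => (hIcc i).2) j
          have h3 : x j + ∑ i ∈ univ.erase j, x i = ∑ i, x i :=
            Finset.add_sum_erase univ x (mem_univ j)
          rw [haa]; linarith
        have ha1 : a ≤ 1 := le_trans (hale i0) hm1
        have ha0 : 0 ≤ a := by rw [haa]; linarith
        rcases eq_or_lt_of_le ha1 with h1 | h1
        · have hx1 : x = fun _ => 1 :=
            funext fun j => le_antisymm (hIcc j).2 (by rw [← h1]; exact hale j)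
          rw [hx1, h1]
          exact subset_convexHull ℝ _ (top_mem n)
        · have h1a : (0:ℝ) < 1 - a := by linarith
          set u : Fin n → ℝ := fun j => (x j - a)/(1 - a) with hu
          have huIcc : ∀ i, u i ∈ Set.Icc (0:ℝ) 1 := fun i =>
            ⟨div_nonneg (by linarith [hale i]) h1a.le,
             by rw [hu]; dsimp only; rw [div_le_one h1a]; linarith [(hIcc i).2]⟩
          have husum : ∑ i, u i = (n:ℝ) - 1 := by
            rw [hu]; dsimp only
            rw [← Finset.sum_div, div_eq_iff (ne_of_gt h1a), Finset.sum_sub_distrib,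
              Finset.sum_const, card_univ, Fintype.card_fin, nsmul_eq_mul]
            rw [haa]; ring
          have humem := hyperplane_mem huIcc husum
          have htop := subset_convexHull ℝ (Verts n) (top_mem n)
          have key : a • ((fun _ => (1:ℝ), (1:ℝ)) : (Fin n → ℝ) × ℝ)
              + (1 - a) • ((u, (0:ℝ)) : (Fin n → ℝ) × ℝ) = (x, a) := by
            refine Prod.ext (funext fun i => ?_) ?_
            · simp only [Prod.fst_add, Prod.smul_fst, Pi.add_apply, Pi.smul_apply, smul_eq_mul]
              rw [hu]; dsimp only
              field_simp
              ring
            · simp only [Prod.snd_add, Prod.smul_snd, smul_eq_mul]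
              ring
          exact key ▸ (convex_convexHull ℝ (Verts n)) htop humem ha0 (by linarith) (by ring)
    -- assemble
    set L := max ((∑ i, x i) - ((n:ℝ)-1)) 0 with hL
    have hLz : L ≤ z := hmax
    have hpxz : p = (x, z) := rfl
    rcases eq_or_lt_of_le (le_trans hLz hzm) with hLM | hLM
    · have hzeq : z = m := le_antisymm hzm (hLM ▸ hLz)
      rw [hpxz, hzeq]
      exact hxM
    · set t := (z - L)/(m - L) with ht
      have hmL : (0:ℝ) < m - L := by linarith
      have ht0 : 0 ≤ t := div_nonneg (by linarith) hmL.le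
      have ht1 : t ≤ 1 := by rw [ht, div_le_one hmL]; linarith
      have key : t • ((x, m) : (Fin n → ℝ) × ℝ) + (1 - t) • ((x, L) : (Fin n → ℝ) × ℝ)
          = (x, z) := by
        refine Prod.ext (funext fun i => ?_) ?_
        · simp only [Prod.fst_add, Prod.smul_fst, Pi.add_apply, Pi.smul_apply, smul_eq_mul]
          ring
        · simp only [Prod.snd_add, Prod.smul_snd, smul_eq_mul]
          rw [ht]
          field_simp
          ring
      rw [hpxz]
      exact key ▸ (convex_convexHull ℝ (Verts n)) hxM hxL ht0 (by linarith) (by ring)
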